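/- (Optimal bandwidths minimize the asymptotic weighted MISE.) Let n be a positive integer and let K, M, N > 0 and L ∈ ℝ satisfy L² < M·N. Define A(h1, h2) = K/(n h1 h2^3) + M h1^4 + N h2^4 + 2L h1² h2² for h1, h2 > 0, and set δ = sqrt( (sqrt(L² + 3MN) + L)/N ). Then δ > 0, L + Nδ² > 0, and A attains its unique global minimum over (0,∞)² at the point h1* = [ 3K / (4 n δ^5 (L + N δ²)) ]^(1/8), h2* = δ · h1*. -/

import Mathlib

open Real

set_option maxHeartbeats 1000000 in
/-- Optimal bandwidths minimize the asymptotic weighted MISE: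
for `K, M, N > 0`, `L² < M·N`, and `A(h1,h2) = K/(n h1 h2³) + M h1⁴ + N h2⁴ + 2 L h1² h2²`,
with `δ = sqrt((sqrt(L² + 3MN) + L)/N)`, we have `δ > 0`, `L + Nδ² > 0`, and `A` attains its
unique global minimum on `(0,∞)²` at `h1* = (3K/(4 n δ⁵ (L + Nδ²)))^(1/8)`, `h2* = δ h1*`. -/
theorem optimal_bandwidth_minimizes_AMISE
    (n : ℕ) (hn : 0 < n) (K M N L : ℝ)
    (hK : 0 < K) (hM : 0 < M) (hN : 0 < N) (hL : L ^ 2 < M * N)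
    (A : ℝ → ℝ → ℝ)
    (hA : ∀ h1 h2 : ℝ, A h1 h2 =
      K / (n * h1 * h2 ^ 3) + M * h1 ^ 4 + N * h2 ^ 4 + 2 * L * h1 ^ 2 * h2 ^ 2)
    (δ : ℝ) (hδ : δ = Real.sqrt ((Real.sqrt (L ^ 2 + 3 * M * N) + L) / N))
    (h1s h2s : ℝ)
    (hh1s : h1s = (3 * K / (4 * n * δ ^ 5 * (L + N * δ ^ 2))) ^ ((1 : ℝ) / 8))
    (hh2s : h2s = δ * h1s) :
    0 < δ ∧ 0 < L + N * δ ^ 2 ∧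
      ∀ h1 h2 : ℝ, 0 < h1 → 0 < h2 → (h1, h2) ≠ (h1s, h2s) → A h1s h2s < A h1 h2 := by
  have hn' : (0:ℝ) < n := Nat.cast_pos.mpr hn
  have hsarg : (0:ℝ) < L ^ 2 + 3 * M * N := by nlinarith [sq_nonneg L, mul_pos hM hN]
  obtain ⟨s, hsdef⟩ : ∃ s : ℝ, s = Real.sqrt (L ^ 2 + 3 * M * N) := ⟨_, rfl⟩
  rw [← hsdef] at hδ
  have hs0 : 0 < s := hsdef ▸ Real.sqrt_pos.mpr hsarg
  have hs2 : s ^ 2 = L ^ 2 + 3 * M * N := hsdef ▸ Real.sq_sqrt hsarg.le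
  have hsL : L < s := by nlinarith [mul_pos hM hN, sq_nonneg (s - L)]
  have hsL2 : -(2*L) < s := by nlinarith [mul_pos hM hN, sq_nonneg (s + 2*L)]
  have hδarg : 0 < (s + L)/N := div_pos (by linarith) hN
  have hδ0 : 0 < δ := hδ ▸ Real.sqrt_pos.mpr hδarg
  have hδ2 : δ ^ 2 = (s + L)/N := hδ ▸ Real.sq_sqrt hδarg.le
  have hNδ2 : N * δ ^ 2 = s + L := by rw [hδ2]; field_simp
  have hLN : 0 < L + N * δ ^ 2 := by rw [hNδ2]; linarith
  refine ⟨hδ0, hLN, ?_⟩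
  -- key algebraic relation: N δ⁴ = 2 L δ² + 3 M
  have key : N * δ ^ 4 = 2 * L * δ ^ 2 + 3 * M := by
    have e1 : (N * δ ^ 2) ^ 2 = (s + L) ^ 2 := by rw [hNδ2]
    have e2 : N * (N * δ ^ 4) = N * (2 * L * δ ^ 2 + 3 * M) := by
      linear_combination e1 + hs2 - 2 * L * hNδ2
    exact mul_left_cancel₀ hN.ne' e2
  have hφδpos : 0 < M + N * δ ^ 4 + 2 * L * δ ^ 2 := by
    nlinarith [mul_pos (mul_pos hδ0 hδ0) hLN]
  -- properties of h1s
  have hBpos : 0 < 3 * K / (4 * n * δ ^ 5 * (L + N * δ ^ 2)) := by positivity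
  have ha0 : 0 < h1s := by rw [hh1s]; positivity
  have ha8 : h1s ^ 8 = 3 * K / (4 * n * δ ^ 5 * (L + N * δ ^ 2)) := by
    rw [hh1s, ← Real.rpow_natCast (_ ^ ((1:ℝ)/8)) 8, ← Real.rpow_mul hBpos.le]
    norm_num
  have hKn : K = (n:ℝ) * δ ^ 3 * (M + N * δ ^ 4 + 2 * L * δ ^ 2) * h1s ^ 8 := by
    have h8 : 3 * K = 4 * n * δ ^ 5 * (L + N * δ ^ 2) * h1s ^ 8 := by
      rw [ha8]; field_simp; exact (div_self (ne_of_gt (by linarith [hLN, mul_comm N (δ ^ 2)] : (0:ℝ) < L + δ ^ 2 * N))).symm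
    linear_combination h8 / 3 + ((n:ℝ) * δ ^ 3 * h1s ^ 8 / 3) * key
  have hsδ2L : 0 < N * δ ^ 2 - 2 * L := by rw [hNδ2]; linarith
  intro h1 h2 hp1 hp2 hne
  obtain ⟨t, htdef⟩ : ∃ t : ℝ, t = h2 / h1 := ⟨_, rfl⟩
  have ht0 : 0 < t := htdef ▸ div_pos hp2 hp1
  have hh2t : h2 = t * h1 := by rw [htdef]; field_simp
  have hφtpos : 0 < M + N * t ^ 4 + 2 * L * t ^ 2 := by
    nlinarith [sq_nonneg (N * t ^ 2 + L), hN.le, sq_nonneg t]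
  by_cases htδ : t = δ
  · -- ratio equals δ: strictness comes from h1 ≠ h1s
    have hx : h1 ≠ h1s := by
      intro h
      apply hne
      rw [hh2t, htδ, h, ← hh2s]
    have hx4 : h1 ^ 4 - h1s ^ 4 ≠ 0 := by
      refine sub_ne_zero_of_ne ?_
      rcases lt_trichotomy h1 h1s with hlt | heq | hgt
      · exact ne_of_lt (pow_lt_pow_left₀ hlt hp1.le (by norm_num))
      · exact absurd heq hx
      · exact ne_of_gt (pow_lt_pow_left₀ hgt ha0.le (by norm_num))
    have hident : A h1 h2 - A h1s h2s =
        (M + N * δ ^ 4 + 2 * L * δ ^ 2) * (h1 ^ 4 - h1s ^ 4) ^ 2 / h1 ^ 4 := by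
      rw [hA h1 h2, hA h1s h2s, hh2t, htδ, hh2s, hKn]
      field_simp
      ring
    have hpos : 0 < (M + N * δ ^ 4 + 2 * L * δ ^ 2) * (h1 ^ 4 - h1s ^ 4) ^ 2 / h1 ^ 4 :=
      div_pos (mul_pos hφδpos (by positivity)) (by positivity)
    linarith [hident]
  · -- ratio differs from δ
    have hDid : δ ^ 3 * (M + N * t ^ 4 + 2 * L * t ^ 2)
          - t ^ 3 * (M + N * δ ^ 4 + 2 * L * δ ^ 2) =
        (δ ^ 2 / 3) * (t - δ) ^ 2 *
          (3 * N * δ * t ^ 2 + 2 * (N * δ ^ 2 - 2 * L) * t + δ * (N * δ ^ 2 - 2 * L)) := by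
      linear_combination ((t ^ 3 - δ ^ 3) / 3) * key
    have hEpos : 0 < 3 * N * δ * t ^ 2 + 2 * (N * δ ^ 2 - 2 * L) * t
        + δ * (N * δ ^ 2 - 2 * L) := by
      have h1' : 0 < 3 * N * δ * t ^ 2 := by positivity
      have h2' : 0 < 2 * (N * δ ^ 2 - 2 * L) * t := by positivity
      have h3' : 0 < δ * (N * δ ^ 2 - 2 * L) := by positivity
      linarith
    have htδ2 : 0 < (t - δ) ^ 2 := by
      have := sub_ne_zero_of_ne htδ
      positivity
    have hDpos : t ^ 3 * (M + N * δ ^ 4 + 2 * L * δ ^ 2)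
        < δ ^ 3 * (M + N * t ^ 4 + 2 * L * t ^ 2) := by
      nlinarith [mul_pos (mul_pos (by positivity : (0:ℝ) < δ ^ 2 / 3) htδ2) hEpos]
    have hAh : A h1 h2 =
        (δ ^ 3 * (M + N * δ ^ 4 + 2 * L * δ ^ 2) * h1s ^ 8
          + h1 ^ 8 * t ^ 3 * (M + N * t ^ 4 + 2 * L * t ^ 2)) / (h1 ^ 4 * t ^ 3) := by
      rw [hA, hh2t, hKn]
      field_simp
      ring
    have hAab : A h1s h2s = 2 * h1s ^ 4 * (M + N * δ ^ 4 + 2 * L * δ ^ 2) := by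
      rw [hA, hh2s, hKn]
      field_simp
      ring
    rw [hAh, hAab, lt_div_iff₀ (by positivity)]
    nlinarith [sq_nonneg (h1 ^ 4 * t ^ 3 * (M + N * t ^ 4 + 2 * L * t ^ 2)
        - h1s ^ 4 * t ^ 3 * (M + N * δ ^ 4 + 2 * L * δ ^ 2)),
      mul_pos (mul_pos (mul_pos (pow_pos ha0 8) (pow_pos ht0 3)) hφδpos) (sub_pos.mpr hDpos),
      mul_pos (pow_pos ht0 3) hφtpos]
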